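/- Under exogenous stepsizes and assumptions A1, A2, if the solution set S* of min(f+g) is empty, then the sequence (x^k) generated by the proximal subgradient splitting method is unbounded. -/

import Mathlib

open Filter Metric Finset Bornology
open scoped RealInnerProductSpace Topology

/-- `w` is a subgradient of `h` at `x`, where `s` is the effective domain of `h`
(the extended-valued function equals `h` on `s` and `+∞` outside). -/
def HasSubgradAt {H : Type*} [NormedAddCommGroup H] [InnerProductSpace ℝ H]
    (s : Set H) (h : H → ℝ) (w x : H) : Prop :=
  ∀ y ∈ s, h x + (inner ℝ w (y - x) : ℝ) ≤ h y

/-- `p` is the proximal point `prox_{αg}(z)`, i.e. a minimizer over the domain `s` of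
`y ↦ g y + (1/(2α)) ‖y - z‖²`. -/
def IsProxPt {H : Type*} [NormedAddCommGroup H] [InnerProductSpace ℝ H]
    (s : Set H) (g : H → ℝ) (α : ℝ) (z p : H) : Prop :=
  p ∈ s ∧ ∀ y ∈ s, g p + (1/(2*α)) * ‖p - z‖^2 ≤ g y + (1/(2*α)) * ‖y - z‖^2

/-- Solution set of `min (f+g)` over the domain `s` of `g`. -/
def SolSet {H : Type*} [NormedAddCommGroup H] (s : Set H) (f g : H → ℝ) : Set H :=
  {z ∈ s | ∀ y ∈ s, f z + g z ≤ f y + g y}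

/-! ### Auxiliary lemmas -/

lemma aux_limit (A B : ℝ) (hB : 0 ≤ B) (h : ∀ t : ℝ, 0 < t → t ≤ 1 → 0 ≤ A + t * B) :
    0 ≤ A := by
  have h2 : ∀ ε > (0:ℝ), -A ≤ 0 + ε := by
    intro ε hε
    have ht0 : 0 < min 1 (ε/(B+1)) := lt_min one_pos (by positivity)
    have ht1 : min 1 (ε/(B+1)) ≤ 1 := min_le_left _ _
    have h3 := h _ ht0 ht1
    have h5 : min 1 (ε/(B+1)) ≤ ε/(B+1) := min_le_right _ _
    have h6 : min 1 (ε/(B+1)) * B ≤ (ε/(B+1)) * B := mul_le_mul_of_nonneg_right h5 hB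
    have h7 : (ε/(B+1)) * B ≤ ε := by
      rw [div_mul_eq_mul_div, div_le_iff₀ (by linarith)]
      nlinarith
    linarith
  linarith [le_of_forall_pos_le_add h2]

/-- Variational inequality characterizing the proximal point. -/
lemma prox_varineq {H : Type*} [NormedAddCommGroup H] [InnerProductSpace ℝ H]
    {s : Set H} {g : H → ℝ} (hg : ConvexOn ℝ s g) {α : ℝ} (hα : 0 < α)
    {z p : H} (hp : IsProxPt s g α z p) {y : H} (hy : y ∈ s) :
    (inner ℝ (z - p) (y - p) : ℝ) ≤ α * (g y - g p) := by
  obtain ⟨hps, hmin⟩ := hp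
  have hαne : α ≠ 0 := ne_of_gt hα
  have key : ∀ t : ℝ, 0 < t → t ≤ 1 →
      0 ≤ ((g y - g p) + (1/α) * (inner ℝ (p - z) (y - p) : ℝ))
        + t * ((1/(2*α)) * ‖y - p‖^2) := by
    intro t ht ht1
    have hyt : p + t • (y - p) ∈ s := by
      have := hg.1 hps hy (by linarith : (0:ℝ) ≤ 1 - t) ht.le (by ring)
      convert this using 1
      module
    have hgyt : g (p + t • (y - p)) ≤ (1 - t) * g p + t * g y := by
      have := hg.2 hps hy (by linarith : (0:ℝ) ≤ 1 - t) ht.le (by ring)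
      calc g (p + t • (y - p)) = g ((1-t) • p + t • y) := by congr 1; module
        _ ≤ (1 - t) * g p + t * g y := this
    have hnorm : ‖p + t • (y - p) - z‖^2
        = ‖p - z‖^2 + 2 * t * (inner ℝ (p - z) (y - p) : ℝ) + t^2 * ‖y - p‖^2 := by
      have he : p + t • (y - p) - z = (p - z) + t • (y - p) := by abel
      rw [he, norm_add_sq_real, real_inner_smul_right, norm_smul]
      simp [abs_of_pos ht, mul_pow]
      ring
    have h2 := hmin _ hyt
    rw [hnorm] at h2
    have h5 : 0 ≤ t * (g y - g p)
        + (1/(2*α)) * (2 * t * (inner ℝ (p - z) (y - p) : ℝ) + t^2 * ‖y - p‖^2) := by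
      nlinarith [h2, hgyt]
    have hid : t * (((g y - g p) + (1/α) * (inner ℝ (p - z) (y - p) : ℝ))
        + t * ((1/(2*α)) * ‖y - p‖^2))
        = t * (g y - g p)
        + (1/(2*α)) * (2 * t * (inner ℝ (p - z) (y - p) : ℝ) + t^2 * ‖y - p‖^2) := by
      field_simp
      ring
    have h4 : 0 ≤ t * (((g y - g p) + (1/α) * (inner ℝ (p - z) (y - p) : ℝ))
        + t * ((1/(2*α)) * ‖y - p‖^2)) := by rw [hid]; exact h5
    exact nonneg_of_mul_nonneg_right h4 ht
  have main := aux_limit _ _ (by positivity) key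
  have hI : (inner ℝ (z - p) (y - p) : ℝ) = -(inner ℝ (p - z) (y - p) : ℝ) := by
    rw [show z - p = -(p - z) by abel, inner_neg_left]
  have hcalc : α * ((g y - g p) + (1/α) * (inner ℝ (p - z) (y - p) : ℝ))
      = α * (g y - g p) + (inner ℝ (p - z) (y - p) : ℝ) := by
    field_simp
  have := mul_nonneg hα.le main
  rw [hcalc] at this
  rw [hI]
  linarith

/-- Closed sublevel sets of a function lsc on a closed set. -/
lemma sublevel_closed {H : Type*} [NormedAddCommGroup H] [InnerProductSpace ℝ H]
    {s : Set H} (hs : IsClosed s) {h : H → ℝ} (hlsc : LowerSemicontinuousOn h s)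
    (c : ℝ) : IsClosed {z ∈ s | h z ≤ c} := by
  apply IsSeqClosed.isClosed
  intro q z hq hzq
  have hqs : ∀ j, q j ∈ s := fun j => (hq j).1
  have hzs : z ∈ s := hs.isSeqClosed hqs hzq
  refine ⟨hzs, ?_⟩
  by_contra hlt
  push_neg at hlt
  have hev := hlsc z hzs c hlt
  have hq' : Tendsto q atTop (𝓝[s] z) := by
    rw [tendsto_nhdsWithin_iff]
    exact ⟨hzq, Eventually.of_forall hqs⟩
  obtain ⟨j, hj⟩ := (hq'.eventually hev).exists
  exact absurd (hq j).2 (not_le.mpr hj)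

/-- A decreasing sequence of nonempty bounded closed convex sets in a Hilbert space has
nonempty intersection. -/
lemma nested_inter {H : Type*} [NormedAddCommGroup H] [InnerProductSpace ℝ H]
    [CompleteSpace H] (D : ℕ → Set H) (hne : ∀ n, (D n).Nonempty)
    (hcl : ∀ n, IsClosed (D n)) (hcv : ∀ n, Convex ℝ (D n))
    (hanti : ∀ {n m : ℕ}, n ≤ m → D m ⊆ D n)
    (hbd : Bornology.IsBounded (D 0)) : (⋂ n, D n).Nonempty := by
  have hproj : ∀ n, ∃ v ∈ D n, ‖(0:H) - v‖ = ⨅ w : D n, ‖(0:H) - w‖ :=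
    fun n => exists_norm_eq_iInf_of_complete_convex (hne n) ((hcl n).isComplete) (hcv n) 0
  choose p hpmem hpnorm using hproj
  have hδle : ∀ n, ∀ w ∈ D n, ‖p n‖ ≤ ‖w‖ := by
    intro n w hw
    have hbdd : BddBelow (Set.range fun w : D n => ‖(0:H) - w‖) := by
      refine ⟨0, ?_⟩
      rintro r ⟨w, rfl⟩
      positivity
    calc ‖p n‖ = ‖(0:H) - p n‖ := by simp
      _ = ⨅ w : D n, ‖(0:H) - w‖ := hpnorm n
      _ ≤ ‖(0:H) - w‖ := ciInf_le hbdd ⟨w, hw⟩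
      _ = ‖w‖ := by simp
  have hmono : Monotone (fun n => ‖p n‖) := by
    intro n m hnm
    exact hδle n (p m) (hanti hnm (hpmem m))
  obtain ⟨R, hR⟩ := hbd.subset_closedBall 0
  have hub : ∀ n, ‖p n‖ ≤ R := by
    intro n
    have := hR (hanti (Nat.zero_le n) (hpmem n))
    simpa [mem_closedBall, dist_eq_norm] using this
  have hbddA : BddAbove (Set.range fun n => ‖p n‖^2) := by
    refine ⟨R^2, ?_⟩
    rintro r ⟨n, rfl⟩
    exact pow_le_pow_left₀ (norm_nonneg _) (hub n) 2
  have hmono2 : Monotone (fun n => ‖p n‖^2) := fun n m h =>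
    pow_le_pow_left₀ (norm_nonneg _) (hmono h) 2
  have hconv : Tendsto (fun n => ‖p n‖^2) atTop (𝓝 (⨆ n, ‖p n‖^2)) :=
    tendsto_atTop_ciSup hmono2 hbddA
  set L := ⨆ n, ‖p n‖^2 with hL
  have hleL : ∀ n, ‖p n‖^2 ≤ L := fun n => le_ciSup hbddA n
  have hpar : ∀ n m : ℕ, n ≤ m → ‖p n - p m‖^2 ≤ 2 * L - 2 * ‖p n‖^2 := by
    intro n m hnm
    have hmid : (1/2 : ℝ) • (p n + p m) ∈ D n := by
      have := hcv n (hpmem n) (hanti hnm (hpmem m))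
        (by norm_num : (0:ℝ) ≤ 1/2) (by norm_num : (0:ℝ) ≤ 1/2) (by norm_num)
      convert this using 1
      module
    have hmidnorm : ‖p n‖ ≤ ‖(1/2 : ℝ) • (p n + p m)‖ := hδle n _ hmid
    have hpll := parallelogram_law_with_norm ℝ (p n) (p m)
    have h4 : ‖(1/2 : ℝ) • (p n + p m)‖^2 = (1/4) * ‖p n + p m‖^2 := by
      rw [norm_smul]
      simp
      ring
    have h5 : ‖p n‖^2 ≤ (1/4) * ‖p n + p m‖^2 := by
      rw [← h4]
      have h0 : (0:ℝ) ≤ ‖p n‖ := norm_nonneg _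
      nlinarith [hmidnorm]
    nlinarith [hleL m, hpll]
  have hcauchy : CauchySeq p := by
    rw [Metric.cauchySeq_iff]
    intro ε hε
    have hε2 : 0 < ε^2 / 2 := by positivity
    obtain ⟨N, hN⟩ := (Metric.tendsto_atTop.mp hconv) (ε^2/2) hε2
    refine ⟨N, fun m hm n hn => ?_⟩
    wlog hnm : n ≤ m generalizing n m
    · rw [dist_comm]
      exact this n hn m hm (le_of_not_ge hnm)
    have h1 := hpar n m hnm
    have h2 := hN n hn
    rw [Real.dist_eq, abs_lt] at h2
    have h4 : ‖p n - p m‖^2 < ε^2 := by linarith [h2.1]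
    rw [dist_eq_norm, norm_sub_rev]
    nlinarith [norm_nonneg (p n - p m), h4, hε]
  obtain ⟨q, hq⟩ := cauchySeq_tendsto_of_complete hcauchy
  refine ⟨q, Set.mem_iInter.mpr fun n => ?_⟩
  refine (hcl n).mem_of_tendsto hq ?_
  filter_upwards [eventually_ge_atTop n] with m hm
  exact hanti hm (hpmem m)

/-- The one-step inequality of the proximal subgradient splitting method. -/
lemma step_ineq {H : Type*} [NormedAddCommGroup H] [InnerProductSpace ℝ H]
    {sf sg : Set H} {f g : H → ℝ}
    (hconvg : ConvexOn ℝ sg g) (hdom : sg ⊆ sf)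
    {ρ : ℝ} (hρ0 : 0 ≤ ρ) (hw : ∀ z ∈ sg, ∃ ww : H, HasSubgradAt sg g ww z ∧ ‖ww‖ ≤ ρ)
    {α : ℝ} (hα : 0 < α) {xk uk p : H} (hxk : xk ∈ sg)
    (hu : HasSubgradAt sf f uk xk) (hp : IsProxPt sg g α (xk - α • uk) p)
    {y : H} (hy : y ∈ sg) :
    ‖p - y‖^2 ≤ ‖xk - y‖^2 + α^2*‖uk‖^2 + 2*ρ*α^2*(‖uk‖+ρ)
      + 2*α*((f y + g y) - (f xk + g xk)) := by
  set z := xk - α • uk with hz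
  have hps : p ∈ sg := hp.1
  obtain ⟨wk, hwk, hwkρ⟩ := hw xk hxk
  have VI2 := prox_varineq hconvg hα hp hxk
  have hzp : z - p = (xk - p) - α • uk := by rw [hz]; abel
  have hinner1 : (inner ℝ (z - p) (xk - p) : ℝ)
      = ‖xk - p‖^2 - α * (inner ℝ uk (xk - p) : ℝ) := by
    rw [hzp, inner_sub_left, real_inner_smul_left, real_inner_self_eq_norm_sq]
  have hgxp : g xk - g p ≤ ρ * ‖xk - p‖ := by
    have h1 := hwk p hps
    have h2 : -(inner ℝ wk (p - xk) : ℝ) ≤ ‖wk‖ * ‖p - xk‖ := by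
      have h3 := abs_le.mp (abs_real_inner_le_norm wk (p - xk))
      linarith [h3.1]
    have h3 : ‖p - xk‖ = ‖xk - p‖ := norm_sub_rev _ _
    have h4 : ‖wk‖ * ‖xk - p‖ ≤ ρ * ‖xk - p‖ :=
      mul_le_mul_of_nonneg_right hwkρ (norm_nonneg _)
    rw [h3] at h2
    linarith
  have hcs1 : (inner ℝ uk (xk - p) : ℝ) ≤ ‖uk‖ * ‖xk - p‖ := real_inner_le_norm _ _
  have hdist : ‖xk - p‖ ≤ α * (‖uk‖ + ρ) := by
    have hsq : ‖xk - p‖^2 ≤ α * (‖uk‖ + ρ) * ‖xk - p‖ := by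
      rw [hinner1] at VI2
      nlinarith [VI2, hgxp, hcs1, hα]
    rcases eq_or_lt_of_le (norm_nonneg (xk - p)) with h0 | h0
    · rw [← h0]; positivity
    · exact le_of_mul_le_mul_right (by nlinarith [hsq]) h0
  have hgstep : g xk - g p ≤ ρ * (α * (‖uk‖ + ρ)) := by
    have := mul_le_mul_of_nonneg_left hdist hρ0
    linarith
  have VI := prox_varineq hconvg hα hp hy
  have hid : ‖p - y‖^2 = ‖z - y‖^2 - ‖z - p‖^2 + 2 * (inner ℝ (z - p) (y - p) : ℝ) := by
    simp only [← real_inner_self_eq_norm_sq, inner_sub_left, inner_sub_right,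
      real_inner_comm]
    ring
  have hzy : ‖z - y‖^2 = ‖xk - y‖^2 - 2 * (α * (inner ℝ uk (xk - y) : ℝ)) + α^2 * ‖uk‖^2 := by
    have he : z - y = (xk - y) - α • uk := by rw [hz]; abel
    rw [he, norm_sub_sq_real, real_inner_smul_right, real_inner_comm (xk - y) uk, norm_smul]
    simp [mul_pow, sq_abs]
  have hfy := hu y (hdom hy)
  have hiu : (inner ℝ uk (y - xk) : ℝ) = -(inner ℝ uk (xk - y) : ℝ) := by
    rw [show y - xk = -(xk - y) by abel, inner_neg_right]
  rw [hiu] at hfy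
  have hfα : α * (-(inner ℝ uk (xk - y) : ℝ)) ≤ α * (f y - f xk) :=
    mul_le_mul_of_nonneg_left (by linarith) hα.le
  have hgα : α * (g y - g p) ≤ α * (g y - g xk) + α * (ρ * (α * (‖uk‖ + ρ))) := by
    have := mul_le_mul_of_nonneg_left hgstep hα.le
    nlinarith [this]
  nlinarith [hid, hzy, VI, hfα, hgα, sq_nonneg ‖z - p‖, hα]

theorem pss_exogenous_empty_solset_unbounded
    {H : Type*} [NormedAddCommGroup H] [InnerProductSpace ℝ H] [CompleteSpace H]
    (sf sg : Set H) (f g : H → ℝ)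
    (hconvf : ConvexOn ℝ sf f) (hconvg : ConvexOn ℝ sg g)
    (hlscf : LowerSemicontinuousOn f sf) (hlscg : LowerSemicontinuousOn g sg)
    (hclg : IsClosed sg) (hdom : sg ⊆ sf) (hneg : sg.Nonempty)
    (A1 : ∀ V : Set H, V ⊆ sg → Bornology.IsBounded V → IsClosed V →
      ∃ ζ > 0, ∀ z ∈ V, ∀ uu : H, HasSubgradAt sf f uu z → ‖uu‖ ≤ ζ)
    (A2 : ∃ ρ ≥ (0:ℝ), ∀ z ∈ sg, ∃ ww : H, HasSubgradAt sg g ww z ∧ ‖ww‖ ≤ ρ)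
    (x u : ℕ → H) (β : ℕ → ℝ) (hβ : ∀ k, 0 < β k)
    (hβ2 : Summable (fun k => (β k)^2))
    (hβdiv : Filter.Tendsto (fun n => ∑ i ∈ Finset.range n, β i) Filter.atTop Filter.atTop)
    (hx0 : x 0 ∈ sg)
    (hu : ∀ k, HasSubgradAt sf f (u k) (x k))
    (hstep : ∀ k, IsProxPt sg g (β k / max 1 ‖u k‖)
      (x k - (β k / max 1 ‖u k‖) • u k) (x (k+1)))
    (hempty : SolSet sg f g = ∅) :
    ¬ Bornology.IsBounded (Set.range x) := by
  intro hb
  obtain ⟨ρ, hρ0, hw⟩ := A2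
  have hxk : ∀ k, x k ∈ sg := by
    intro k
    induction k with
    | zero => exact hx0
    | succ n _ => exact (hstep n).1
  -- uniform bound on the subgradients
  have hVsub : closure (Set.range x) ⊆ sg :=
    closure_minimal (Set.range_subset_iff.mpr hxk) hclg
  obtain ⟨ζ, hζ0, hζ⟩ := A1 _ hVsub hb.closure isClosed_closure
  have hub : ∀ k, ‖u k‖ ≤ ζ := fun k =>
    hζ _ (subset_closure (Set.mem_range_self k)) _ (hu k)
  -- stepsize facts
  have hmax : ∀ k, (0:ℝ) < max 1 ‖u k‖ := fun k => lt_of_lt_of_le one_pos (le_max_left _ _)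
  have hapos : ∀ k, 0 < β k / max 1 ‖u k‖ := fun k => div_pos (hβ k) (hmax k)
  have haβ : ∀ k, β k / max 1 ‖u k‖ ≤ β k := fun k => div_le_self (hβ k).le (le_max_left _ _)
  have hau : ∀ k, (β k / max 1 ‖u k‖) * ‖u k‖ ≤ β k := by
    intro k
    rw [div_mul_eq_mul_div, div_le_iff₀ (hmax k)]
    exact mul_le_mul_of_nonneg_left (le_max_right _ _) (hβ k).le
  have halow : ∀ k, β k / max 1 ζ ≤ β k / max 1 ‖u k‖ := fun k =>
    div_le_div_of_nonneg_left (hβ k).le (hmax k) (max_le_max le_rfl (hub k))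
  -- the key one-step inequality with exogenous stepsizes
  have key : ∀ k, ∀ y ∈ sg, ‖x (k+1) - y‖^2 ≤ ‖x k - y‖^2 + (1+2*ρ+2*ρ^2) * (β k)^2
      + 2 * (β k / max 1 ‖u k‖) * ((f y + g y) - (f (x k) + g (x k))) := by
    intro k y hy
    have hs := step_ineq hconvg hdom hρ0 hw (hapos k) (hxk k) (hu k) (hstep k) hy
    have hab : 0 ≤ (β k / max 1 ‖u k‖) * ‖u k‖ := mul_nonneg (hapos k).le (norm_nonneg _)
    have h1 : (β k / max 1 ‖u k‖)^2 * ‖u k‖^2 ≤ (β k)^2 := by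
      have := mul_le_mul (hau k) (hau k) hab (hβ k).le
      nlinarith [this]
    have h2 : (β k / max 1 ‖u k‖)^2 * ‖u k‖ ≤ (β k)^2 := by
      have := mul_le_mul (haβ k) (hau k) hab (hβ k).le
      nlinarith [this]
    have h3 : (β k / max 1 ‖u k‖)^2 ≤ (β k)^2 := by
      have := mul_le_mul (haβ k) (haβ k) (hapos k).le (hβ k).le
      nlinarith [this]
    have h4 : ρ * ((β k / max 1 ‖u k‖)^2 * ‖u k‖) ≤ ρ * (β k)^2 :=
      mul_le_mul_of_nonneg_left h2 hρ0
    have h5 : ρ^2 * (β k / max 1 ‖u k‖)^2 ≤ ρ^2 * (β k)^2 :=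
      mul_le_mul_of_nonneg_left h3 (sq_nonneg ρ)
    nlinarith [hs, h1, h4, h5]
  -- telescoping
  have tele : ∀ y ∈ sg, ∀ n, ‖x n - y‖^2 ≤ ‖x 0 - y‖^2
      + (1+2*ρ+2*ρ^2) * (∑ i ∈ range n, (β i)^2)
      + 2 * ∑ i ∈ range n, (β i / max 1 ‖u i‖) * ((f y + g y) - (f (x i) + g (x i))) := by
    intro y hy n
    induction n with
    | zero => simp
    | succ n ih =>
      have hk := key n y hy
      rw [sum_range_succ, sum_range_succ]
      linarith [hk, ih]
  -- the liminf property: values along the sequence go below any value + ε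
  have claim : ∀ y ∈ sg, ∀ ε > (0:ℝ), ∃ k, f (x k) + g (x k) < f y + g y + ε := by
    intro y hy ε hε
    by_contra hcon
    push_neg at hcon
    have hsum : ∀ n, 2 * ε * (∑ i ∈ range n, β i / max 1 ‖u i‖)
        ≤ ‖x 0 - y‖^2 + (1+2*ρ+2*ρ^2) * (∑' i, (β i)^2) := by
      intro n
      have h1 := tele y hy n
      have h2 : ∑ i ∈ range n, (β i / max 1 ‖u i‖) * ((f y + g y) - (f (x i) + g (x i)))
          ≤ ∑ i ∈ range n, (β i / max 1 ‖u i‖) * (-ε) := by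
        apply Finset.sum_le_sum
        intro i _
        apply mul_le_mul_of_nonneg_left _ (hapos i).le
        linarith [hcon i]
      have h3 : ∑ i ∈ range n, (β i)^2 ≤ ∑' i, (β i)^2 :=
        Summable.sum_le_tsum _ (fun i _ => sq_nonneg _) hβ2
      have h5 : ∑ i ∈ range n, (β i / max 1 ‖u i‖) * (-ε)
          = -(ε * ∑ i ∈ range n, β i / max 1 ‖u i‖) := by
        rw [← Finset.sum_mul]
        ring
      have h6 : (1+2*ρ+2*ρ^2) * (∑ i ∈ range n, (β i)^2)
          ≤ (1+2*ρ+2*ρ^2) * (∑' i, (β i)^2) :=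
        mul_le_mul_of_nonneg_left h3 (by nlinarith [hρ0])
      rw [h5] at h2
      have h7 : 0 ≤ ‖x n - y‖^2 := sq_nonneg _
      linarith
    have hdiv2 : Tendsto (fun n => ∑ i ∈ range n, β i / max 1 ‖u i‖) atTop atTop := by
      have hM : (0:ℝ) < 1 / max 1 ζ := by
        have : (0:ℝ) < max 1 ζ := lt_of_lt_of_le one_pos (le_max_left _ _)
        positivity
      have h8 : Tendsto (fun n => (1 / max 1 ζ) * ∑ i ∈ range n, β i) atTop atTop :=
        hβdiv.const_mul_atTop hM
      apply tendsto_atTop_mono _ h8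
      intro n
      rw [Finset.mul_sum]
      apply Finset.sum_le_sum
      intro i _
      have heq : (1 / max 1 ζ) * β i = β i / max 1 ζ := by ring
      rw [heq]
      exact halow i
    set K := ‖x 0 - y‖^2 + (1+2*ρ+2*ρ^2) * (∑' i, (β i)^2) with hK
    obtain ⟨n, hn⟩ := (tendsto_atTop.mp hdiv2 (K/(2*ε) + 1)).exists
    have h9 := hsum n
    have h10 : (0:ℝ) < 2 * ε := by linarith
    have h11 := mul_le_mul_of_nonneg_left hn h10.le
    have h12 : 2*ε*(K/(2*ε) + 1) = K + 2*ε := by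
      field_simp
    linarith
  -- lower bound for the values along the sequence
  obtain ⟨R, hR⟩ := hb.subset_closedBall (x 0)
  have hdistk : ∀ k, ‖x k - x 0‖ ≤ R := by
    intro k
    have := hR (Set.mem_range_self k)
    rwa [mem_closedBall, dist_eq_norm] at this
  obtain ⟨w0, hw0, hw0ρ⟩ := hw (x 0) hx0
  have hlb : ∀ k, f (x 0) + g (x 0) - (ζ + ρ) * R ≤ f (x k) + g (x k) := by
    intro k
    have hf := hu 0 (x k) (hdom (hxk k))
    have hg := hw0 (x k) (hxk k)
    have h1 : -(inner ℝ (u 0) (x k - x 0) : ℝ) ≤ ζ * R := by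
      have ha := abs_le.mp (abs_real_inner_le_norm (u 0) (x k - x 0))
      have h2 : ‖u 0‖ * ‖x k - x 0‖ ≤ ζ * R :=
        mul_le_mul (hub 0) (hdistk k) (norm_nonneg _) hζ0.le
      linarith [ha.1]
    have h3 : -(inner ℝ w0 (x k - x 0) : ℝ) ≤ ρ * R := by
      have ha := abs_le.mp (abs_real_inner_le_norm w0 (x k - x 0))
      have h2 : ‖w0‖ * ‖x k - x 0‖ ≤ ρ * R :=
        mul_le_mul hw0ρ (hdistk k) (norm_nonneg _) hρ0
      linarith [ha.1]
    linarith
  have hbdd : BddBelow (Set.range fun k => f (x k) + g (x k)) := by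
    refine ⟨f (x 0) + g (x 0) - (ζ + ρ) * R, ?_⟩
    rintro r ⟨k, rfl⟩
    exact hlb k
  set m := ⨅ k, (f (x k) + g (x k)) with hm
  have hmle : ∀ k, m ≤ f (x k) + g (x k) := fun k => ciInf_le hbdd k
  have hmFy : ∀ y ∈ sg, m ≤ f y + g y := by
    intro y hy
    have h2 : ∀ ε > (0:ℝ), m ≤ (f y + g y) + ε := by
      intro ε hε
      obtain ⟨k, hk⟩ := claim y hy ε hε
      linarith [hmle k]
    exact le_of_forall_pos_le_add h2
  -- nested sets
  have hconvsum : ConvexOn ℝ sg (fun z => f z + g z) :=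
    (hconvf.subset hdom hconvg.1).add hconvg
  have hlscsum : LowerSemicontinuousOn (fun z => f z + g z) sg :=
    (hlscf.mono hdom).add hlscg
  set D : ℕ → Set H := fun n => {z ∈ sg | f z + g z ≤ m + 1/(n+1)} ∩ closedBall (x 0) R
    with hD
  have hne : ∀ n, (D n).Nonempty := by
    intro n
    have hpos : (0:ℝ) < 1/((n:ℝ)+1) := by positivity
    have hlt : m < m + 1/((n:ℝ)+1) := by linarith
    obtain ⟨k, hk⟩ := exists_lt_of_ciInf_lt hlt
    exact ⟨x k, ⟨⟨hxk k, hk.le⟩, hR (Set.mem_range_self k)⟩⟩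
  have hclD : ∀ n, IsClosed (D n) := fun n =>
    (sublevel_closed hclg hlscsum _).inter isClosed_closedBall
  have hcvD : ∀ n, Convex ℝ (D n) := fun n =>
    (hconvsum.convex_le _).inter (convex_closedBall _ _)
  have hantiD : ∀ {n' m' : ℕ}, n' ≤ m' → D m' ⊆ D n' := by
    intro n' m' hnm z hz
    refine ⟨⟨hz.1.1, le_trans hz.1.2 ?_⟩, hz.2⟩
    have h1 : 1/((m':ℝ)+1) ≤ 1/((n':ℝ)+1) :=
      one_div_le_one_div_of_le (by positivity) (by exact_mod_cast by omega)
    linarith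
  have hbdD : IsBounded (D 0) := isBounded_closedBall.subset Set.inter_subset_right
  obtain ⟨q, hq⟩ := nested_inter D hne hclD hcvD hantiD hbdD
  have hqn : ∀ n, q ∈ D n := Set.mem_iInter.mp hq
  have hqs : q ∈ sg := (hqn 0).1.1
  have hqval : f q + g q ≤ m := by
    apply le_of_forall_pos_le_add
    intro ε hε
    obtain ⟨n, hn⟩ := exists_nat_one_div_lt hε
    have := (hqn n).1.2
    linarith
  have hsol : q ∈ SolSet sg f g := ⟨hqs, fun y hy => hqval.trans (hmFy y hy)⟩
  rw [hempty] at hsol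
  exact hsol
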